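/- Assume 𝓜 ⊆ M_n(ℝ) is bounded and the switched system (Σ_𝓜) is uniformly stable. Then the function V(x) = sup { ‖Φ_A(t,0)x‖ : t ≥ 0, A a switching law } is finite-valued, convex, absolutely homogeneous of degree one, and is a nonstrict common Lyapunov function for (Σ_𝓜). -/

import Mathlib

open MeasureTheory Set
open scoped RealInnerProductSpace

noncomputable section

attribute [local instance] Matrix.normedAddCommGroup Matrix.normedSpace

local instance matrixMeasurableSpace {n : ℕ} :
    MeasurableSpace (Matrix (Fin n) (Fin n) ℝ) :=
  inferInstanceAs (MeasurableSpace (Fin n → Fin n → ℝ))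

/-- The space of `n × n` real matrices. -/
abbrev Mat (n : ℕ) := Matrix (Fin n) (Fin n) ℝ

/-- The state space `ℝⁿ` with its Euclidean structure. -/
abbrev Vec (n : ℕ) := EuclideanSpace ℝ (Fin n)

/-- Action of a matrix on a vector of Euclidean space. -/
def Mat.act {n : ℕ} (M : Mat n) (x : Vec n) : Vec n := Matrix.toEuclideanLin M x

/-- A switching law for the switched system `(Σ_𝓜)`: a measurable function taking values in `𝓜`. -/
def IsSwitchingLaw {n : ℕ} (𝓜 : Set (Mat n)) (A : ℝ → Mat n) : Prop :=
  Measurable A ∧ ∀ t, 0 ≤ t → A t ∈ 𝓜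

/-- `Φ` is the fundamental matrix `t ↦ Φ_A(t,0)` of the switching law `A`: the continuous
solution on `[0,∞)` of `Φ(t) = Id + ∫₀ᵗ A(s) Φ(s) ds`. -/
def IsFundamentalMatrix {n : ℕ} (A : ℝ → Mat n) (Φ : ℝ → Mat n) : Prop :=
  ContinuousOn Φ (Ici (0:ℝ)) ∧
  ∀ t, 0 ≤ t → Φ t = 1 + ∫ s in (0:ℝ)..t, A s * Φ s

/-- Uniform stability of the switched system `(Σ_𝓜)`. -/
def UniformlyStable {n : ℕ} (𝓜 : Set (Mat n)) : Prop :=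
  ∃ C > 0, ∀ A Φ : ℝ → Mat n, IsSwitchingLaw 𝓜 A → IsFundamentalMatrix A Φ →
    ∀ t, 0 ≤ t → ‖Φ t‖ ≤ C

/-- Uniform exponential stability of the switched system `(Σ_𝓜)`. -/
def UniformlyExpStable {n : ℕ} (𝓜 : Set (Mat n)) : Prop :=
  ∃ C > 0, ∃ γ > 0, ∀ A Φ : ℝ → Mat n, IsSwitchingLaw 𝓜 A → IsFundamentalMatrix A Φ →
    ∀ t, 0 ≤ t → ‖Φ t‖ ≤ C * Real.exp (-γ * t)

/-- A nonstrict common Lyapunov function for `(Σ_𝓜)`: continuous, nonnegative, positive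
definite, and non-increasing along every trajectory. -/
def IsNonstrictCLF {n : ℕ} (𝓜 : Set (Mat n)) (V : Vec n → ℝ) : Prop :=
  Continuous V ∧ (∀ x, 0 ≤ V x) ∧ V 0 = 0 ∧ (∀ x, x ≠ 0 → 0 < V x) ∧
  ∀ A Φ : ℝ → Mat n, IsSwitchingLaw 𝓜 A → IsFundamentalMatrix A Φ → ∀ x₀ : Vec n,
    AntitoneOn (fun t => V ((Φ t).act x₀)) (Ici 0)

/-- A (strict) common Lyapunov function for `(Σ_𝓜)`: a nonstrict one that is moreover
strictly decreasing along every nonzero trajectory. -/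
def IsCLF {n : ℕ} (𝓜 : Set (Mat n)) (V : Vec n → ℝ) : Prop :=
  IsNonstrictCLF 𝓜 V ∧
  ∀ A Φ : ℝ → Mat n, IsSwitchingLaw 𝓜 A → IsFundamentalMatrix A Φ → ∀ x₀ : Vec n, x₀ ≠ 0 →
    StrictAntiOn (fun t => V ((Φ t).act x₀)) (Ici 0)

/-- A universal class of Lyapunov functions. -/
def IsUniversalClass {n : ℕ} (P : Set (Vec n → ℝ)) : Prop :=
  ∀ 𝓜 : Set (Mat n), Bornology.IsBounded 𝓜 → UniformlyExpStable 𝓜 →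
    ∃ V ∈ P, IsCLF 𝓜 V

/-- `V` is absolutely homogeneous of degree `α`. -/
def AbsHomog {n : ℕ} (α : ℝ) (V : Vec n → ℝ) : Prop :=
  ∀ (lam : ℝ) (x : Vec n), V (lam • x) = |lam| ^ α * V x

/-- The subdifferential of a convex function. -/
def subdiff {n : ℕ} (V : Vec n → ℝ) (x : Vec n) : Set (Vec n) :=
  {l | ∀ y, ⟪l, y - x⟫ ≤ V y - V x}

/-- The set of values `‖Φ_A(t,0) x‖` over all switching laws `A` and times `t ≥ 0`. -/
def trajNorms {n : ℕ} (M : Set (Mat n)) (x : Vec n) : Set ℝ :=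
  {r : ℝ | ∃ (A Φ : ℝ → Mat n) (t : ℝ),
    IsSwitchingLaw M A ∧ IsFundamentalMatrix A Φ ∧ 0 ≤ t ∧ r = ‖(Φ t).act x‖}

section AuxA
variable {n : ℕ}

local instance matTopA : TopologicalSpace (Mat n) :=
  (Matrix.normedAddCommGroup : NormedAddCommGroup (Mat n)).toUniformSpace.toTopologicalSpace

local instance matCMulA : ContinuousMul (Mat n) :=
  (inferInstance : @ContinuousMul (Matrix (Fin n) (Fin n) ℝ) instTopologicalSpaceMatrix _)

local instance : BorelSpace (Mat n) := Pi.borelSpace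

lemma Mat.act_eq_clm (M : Mat n) (x : Vec n) : M.act x = Matrix.toEuclideanCLM (𝕜 := ℝ) M x := rfl

lemma Mat.act_one (x : Vec n) : Mat.act (1 : Mat n) x = x := by
  rw [Mat.act_eq_clm, map_one]; rfl

lemma Mat.act_mul (X Y : Mat n) (x : Vec n) : Mat.act (X * Y) x = Mat.act X (Mat.act Y x) := by
  rw [Mat.act_eq_clm, Mat.act_eq_clm, Mat.act_eq_clm, map_mul]; rfl

lemma Mat.act_zero (M : Mat n) : M.act (0 : Vec n) = 0 := by
  rw [Mat.act_eq_clm]; exact map_zero _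

lemma Mat.act_smul (M : Mat n) (a : ℝ) (x : Vec n) : M.act (a • x) = a • M.act x := by
  rw [Mat.act_eq_clm, Mat.act_eq_clm]; exact map_smul _ _ _

lemma Mat.act_addv (M : Mat n) (x y : Vec n) : M.act (x + y) = M.act x + M.act y := by
  rw [Mat.act_eq_clm, Mat.act_eq_clm, Mat.act_eq_clm]; exact map_add _ _ _

/-- The matrix-to-CLM map as a continuous linear map. -/
def matCLM (n : ℕ) : Mat n →L[ℝ] (Vec n →L[ℝ] Vec n) :=
  LinearMap.toContinuousLinearMap
    { toFun := fun M => Matrix.toEuclideanCLM (𝕜 := ℝ) M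
      map_add' := fun X Y => map_add _ X Y
      map_smul' := fun a X => map_smul _ a X }

def matCLMsymm (n : ℕ) : (Vec n →L[ℝ] Vec n) →L[ℝ] Mat n :=
  LinearMap.toContinuousLinearMap
    { toFun := fun L => (Matrix.toEuclideanCLM (𝕜 := ℝ)).symm L
      map_add' := fun X Y => map_add _ X Y
      map_smul' := fun a X => map_smul _ a X }

lemma matCLM_apply (M : Mat n) : matCLM n M = Matrix.toEuclideanCLM (𝕜 := ℝ) M := rfl
lemma matCLMsymm_apply (L : Vec n →L[ℝ] Vec n) :
    matCLMsymm n L = (Matrix.toEuclideanCLM (𝕜 := ℝ)).symm L := rfl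

/-- A single constant controlling the action and products. -/
lemma exists_mat_const (n : ℕ) : ∃ c : ℝ, 1 ≤ c ∧
    (∀ (M : Mat n) (x : Vec n), ‖M.act x‖ ≤ c * ‖M‖ * ‖x‖) ∧
    (∀ X Y : Mat n, ‖X * Y‖ ≤ c * ‖X‖ * ‖Y‖) := by
  set c₁ : ℝ := ‖matCLM n‖ with hc₁
  set c₂ : ℝ := ‖matCLMsymm n‖ with hc₂
  have h₁ : (0:ℝ) ≤ c₁ := norm_nonneg (matCLM n)
  have h₂ : (0:ℝ) ≤ c₂ := norm_nonneg (matCLMsymm n)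
  refine ⟨max 1 (max c₁ (c₂ * c₁ * c₁)), le_max_left _ _, ?_, ?_⟩
  · intro M x
    have : ‖M.act x‖ ≤ ‖matCLM n M‖ * ‖x‖ := by
      rw [Mat.act_eq_clm, ← matCLM_apply]; exact (matCLM n M).le_opNorm x
    refine this.trans ?_
    have h3 : ‖matCLM n M‖ ≤ c₁ * ‖M‖ := (matCLM n).le_opNorm M
    calc ‖matCLM n M‖ * ‖x‖ ≤ (c₁ * ‖M‖) * ‖x‖ :=
          mul_le_mul_of_nonneg_right h3 (norm_nonneg _)
      _ ≤ (max 1 (max c₁ (c₂ * c₁ * c₁)) * ‖M‖) * ‖x‖ := by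
          have : c₁ ≤ max 1 (max c₁ (c₂ * c₁ * c₁)) := le_max_of_le_right (le_max_left _ _)
          gcongr
  · intro X Y
    have hXY : X * Y = matCLMsymm n (matCLM n X * matCLM n Y) := by
      rw [matCLMsymm_apply, matCLM_apply, matCLM_apply, ← map_mul,
        StarAlgEquiv.symm_apply_apply]
    rw [hXY]
    calc ‖matCLMsymm n (matCLM n X * matCLM n Y)‖
        ≤ c₂ * ‖matCLM n X * matCLM n Y‖ := (matCLMsymm n).le_opNorm _
      _ ≤ c₂ * (‖matCLM n X‖ * ‖matCLM n Y‖) := by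
          gcongr; exact norm_mul_le _ _
      _ ≤ c₂ * ((c₁ * ‖X‖) * (c₁ * ‖Y‖)) := by
          gcongr <;> [exact (matCLM n).le_opNorm X; exact (matCLM n).le_opNorm Y]
      _ = (c₂ * c₁ * c₁) * ‖X‖ * ‖Y‖ := by ring
      _ ≤ max 1 (max c₁ (c₂ * c₁ * c₁)) * ‖X‖ * ‖Y‖ := by
          have : (c₂ * c₁ * c₁) ≤ max 1 (max c₁ (c₂ * c₁ * c₁)) :=
            le_max_of_le_right (le_max_right _ _)
          gcongr

/-- Integrability of `s ↦ A s * Φ s` on nonnegative intervals. -/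
lemma intInt {A Φ : ℝ → Mat n} (hA : Measurable A) {R : ℝ}
    (hR : ∀ s, 0 ≤ s → ‖A s‖ ≤ R) (hΦ : ContinuousOn Φ (Ici 0))
    {a b : ℝ} (ha : 0 ≤ a) (hab : a ≤ b) :
    IntervalIntegrable (fun s => A s * Φ s) volume a b := by
  obtain ⟨c, hc1, -, hcmul⟩ := exists_mat_const n
  obtain ⟨K, hK⟩ := isCompact_Icc.exists_bound_of_continuousOn
    (hΦ.mono (fun x hx => le_trans ha (hx.1 : a ≤ x)))
  rw [intervalIntegrable_iff_integrableOn_Ioc_of_le hab]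
  have hsub : Ioc a b ⊆ Icc a b := Ioc_subset_Icc_self
  have hmeas : AEStronglyMeasurable (fun s => A s * Φ s) (volume.restrict (Ioc a b)) := by
    refine AEStronglyMeasurable.mul ?_ ?_
    · exact hA.aestronglyMeasurable.restrict
    · exact (hΦ.mono (fun x hx => le_trans ha (le_of_lt hx.1))).aestronglyMeasurable
        measurableSet_Ioc
  have hc0 : (0:ℝ) ≤ c := le_trans zero_le_one hc1
  have hR0 : (0:ℝ) ≤ R := le_trans (norm_nonneg _) (hR a ha)
  refine Integrable.mono' (integrable_const (c * R * K)) hmeas ?_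
  refine (ae_restrict_iff' measurableSet_Ioc).2 (Filter.Eventually.of_forall ?_)
  intro s hs
  have hs0 : 0 ≤ s := le_trans ha (le_of_lt hs.1)
  calc ‖A s * Φ s‖ ≤ c * ‖A s‖ * ‖Φ s‖ := hcmul _ _
    _ ≤ c * R * K :=
        mul_le_mul (mul_le_mul_of_nonneg_left (hR s hs0) hc0) (hK s (hsub hs))
          (norm_nonneg _) (mul_nonneg hc0 hR0)

lemma IntervalIntegrable.clm_comp' {E F : Type*} [NormedAddCommGroup E] [NormedSpace ℝ E]
    [NormedAddCommGroup F] [NormedSpace ℝ F] (L : E →L[ℝ] F) {f : ℝ → E} {a b : ℝ}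
    (h : IntervalIntegrable f volume a b) :
    IntervalIntegrable (fun s => L (f s)) volume a b :=
  ⟨L.integrable_comp h.1, L.integrable_comp h.2⟩

lemma fund_zero {A Φ : ℝ → Mat n} (hΦ : IsFundamentalMatrix A Φ) : Φ 0 = 1 := by
  have := hΦ.2 0 le_rfl
  simpa using this

lemma fund_diff {A Φ : ℝ → Mat n} (hA : Measurable A) {R : ℝ}
    (hR : ∀ s, 0 ≤ s → ‖A s‖ ≤ R) (hΦ : IsFundamentalMatrix A Φ)
    {a b : ℝ} (ha : 0 ≤ a) (hab : a ≤ b) :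
    Φ b = Φ a + ∫ s in a..b, A s * Φ s := by
  have h1 : IntervalIntegrable (fun s => A s * Φ s) volume 0 a := intInt hA hR hΦ.1 le_rfl ha
  have h2 : IntervalIntegrable (fun s => A s * Φ s) volume a b := intInt hA hR hΦ.1 ha hab
  have hb0 : (0:ℝ) ≤ b := le_trans ha hab
  rw [hΦ.2 b hb0, hΦ.2 a ha, ← intervalIntegral.integral_add_adjacent_intervals h1 h2]
  abel

/-- evaluation at `x` as a CLM on matrices -/
def actCLM (x : Vec n) : Mat n →L[ℝ] Vec n :=
  LinearMap.toContinuousLinearMap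
    { toFun := fun M : Mat n => Matrix.toEuclideanLin M x
      map_add' := fun X Y => by
        show Matrix.toEuclideanLin (X + Y) x = _
        rw [_root_.map_add Matrix.toEuclideanLin X Y]; rfl
      map_smul' := fun a X => by
        show Matrix.toEuclideanLin (a • X) x = _
        rw [_root_.map_smul Matrix.toEuclideanLin a X]; rfl }

lemma actCLM_apply (x : Vec n) (M : Mat n) : actCLM x M = M.act x := rfl

lemma fund_vec_diff {A Φ : ℝ → Mat n} (hA : Measurable A) {R : ℝ}
    (hR : ∀ s, 0 ≤ s → ‖A s‖ ≤ R) (hΦ : IsFundamentalMatrix A Φ) (x : Vec n)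
    {a b : ℝ} (ha : 0 ≤ a) (hab : a ≤ b) :
    Mat.act (Φ b) x = Mat.act (Φ a) x + ∫ s in a..b, Mat.act (A s) (Mat.act (Φ s) x) := by
  have h2 : IntervalIntegrable (fun s => A s * Φ s) volume a b := intInt hA hR hΦ.1 ha hab
  have := congrArg (actCLM x) (fund_diff hA hR hΦ ha hab)
  rw [map_add, ← (actCLM x).intervalIntegral_comp_comm h2] at this
  simpa only [actCLM_apply, Mat.act_mul] using this

end AuxA
section AuxB
variable {n : ℕ}

local instance matTopB : TopologicalSpace (Mat n) :=
  (Matrix.normedAddCommGroup : NormedAddCommGroup (Mat n)).toUniformSpace.toTopologicalSpace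

lemma Mat.act_subv (M : Mat n) (x y : Vec n) : M.act (x - y) = M.act x - M.act y := by
  rw [Mat.act_eq_clm, Mat.act_eq_clm, Mat.act_eq_clm]; exact map_sub _ _ _

lemma fund_act_eq_zero {A Φ : ℝ → Mat n} (hA : Measurable A) {R : ℝ}
    (hR : ∀ s, 0 ≤ s → ‖A s‖ ≤ R) (hΦ : IsFundamentalMatrix A Φ)
    {t : ℝ} (ht : 0 ≤ t) (x : Vec n) (h0 : Mat.act (Φ t) x = 0) : x = 0 := by
  obtain ⟨c, hc1, hact, -⟩ := exists_mat_const n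
  have hc0 : (0:ℝ) ≤ c := le_trans zero_le_one hc1
  have hR0 : (0:ℝ) ≤ R := le_trans (norm_nonneg _) (hR 0 le_rfl)
  set C : ℝ := c * R with hC
  have hC0 : (0:ℝ) ≤ C := mul_nonneg hc0 hR0
  set y : ℝ → Vec n := fun τ => Mat.act (Φ τ) x with hy_def
  have hy : ContinuousOn y (Ici 0) := (actCLM x).continuous.comp_continuousOn hΦ.1
  set p : ℝ → ℝ := fun σ => max 0 (min σ t) with hp_def
  have hp : Continuous p := continuous_const.max (continuous_id.min continuous_const)
  have hp0 : ∀ σ, p σ ∈ Ici (0:ℝ) := fun σ => show (0:ℝ) ≤ max 0 (min σ t) from le_max_left _ _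
  have hpin : ∀ σ ∈ Icc (0:ℝ) t, p σ = σ := by
    intro σ hσ
    simp only [hp_def, min_eq_left hσ.2, max_eq_right hσ.1]
  set g : ℝ → ℝ := fun σ => ‖y (p σ)‖ with hg_def
  have hg : Continuous g := (hy.comp_continuous hp hp0).norm
  have g_eq : ∀ σ ∈ Icc (0:ℝ) t, g σ = ‖y σ‖ := by
    intro σ hσ; simp only [hg_def, hpin σ hσ]
  have vecInt : ∀ {a b : ℝ}, 0 ≤ a → a ≤ b →
      IntervalIntegrable (fun r => Mat.act (A r) (y r)) volume a b := by
    intro a b ha hab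
    have h2 := IntervalIntegrable.clm_comp' (actCLM x) (intInt hA hR hΦ.1 ha hab)
    have heq : (fun s => actCLM x (A s * Φ s)) = fun r => Mat.act (A r) (y r) := by
      funext r; rw [actCLM_apply, Mat.act_mul]
    rwa [heq] at h2
  have key : ∀ σ ∈ Icc (0:ℝ) t, ‖y σ‖ ≤ ‖y t‖ + C * ∫ r in σ..t, g r := by
    intro σ hσ
    have hveq := fund_vec_diff hA hR hΦ x hσ.1 hσ.2
    have hy_eq : y σ = y t - ∫ r in σ..t, Mat.act (A r) (y r) := by
      rw [hy_def]; simp only; rw [hveq]; abel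
    rw [hy_eq]
    refine (norm_sub_le _ _).trans ?_
    have h1 : ‖∫ r in σ..t, Mat.act (A r) (y r)‖ ≤ ∫ r in σ..t, ‖Mat.act (A r) (y r)‖ :=
      intervalIntegral.norm_integral_le_integral_norm hσ.2
    have h2 : (∫ r in σ..t, ‖Mat.act (A r) (y r)‖) ≤ ∫ r in σ..t, C * g r := by
      refine intervalIntegral.integral_mono_on hσ.2 ((vecInt hσ.1 hσ.2).norm)
        ((continuous_const.mul hg).intervalIntegrable (μ := volume) _ _) ?_
      intro r hr
      have hr0 : (0:ℝ) ≤ r := le_trans hσ.1 hr.1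
      have hrt : r ∈ Icc (0:ℝ) t := ⟨hr0, hr.2⟩
      calc ‖Mat.act (A r) (y r)‖ ≤ c * ‖A r‖ * ‖y r‖ := hact _ _
        _ ≤ c * R * ‖y r‖ := by
            have := hR r hr0
            exact mul_le_mul_of_nonneg_right (mul_le_mul_of_nonneg_left this hc0)
              (norm_nonneg _)
        _ = C * g r := by rw [g_eq r hrt]
    have h3 : (∫ r in σ..t, C * g r) = C * ∫ r in σ..t, g r := by
      simpa using intervalIntegral.integral_const_mul (𝕜 := ℝ) C g (a := σ) (b := t)
    linarith
  set G : ℝ → ℝ := fun σ => ∫ r in (0:ℝ)..σ, g r with hG_def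
  have hGd : ∀ σ, HasDerivAt G (g σ) σ := by
    intro σ
    exact intervalIntegral.integral_hasDerivAt_right
      (hg.intervalIntegrable (μ := volume) (0:ℝ) σ)
      (hg.stronglyMeasurableAtFilter volume (nhds σ)) hg.continuousAt
  have Gsplit : ∀ σ, G t - G σ = ∫ r in σ..t, g r := by
    intro σ
    have := intervalIntegral.integral_add_adjacent_intervals
      (hg.intervalIntegrable (μ := volume) 0 σ) (hg.intervalIntegrable (μ := volume) σ t)
    rw [hG_def]; simp only; linarith
  set H : ℝ → ℝ := fun σ => ‖y t‖ + C * (G t - G σ) with hH_def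
  set P : ℝ → ℝ := fun σ => H σ * Real.exp (C * σ) with hP_def
  have hHd : ∀ σ, HasDerivAt H (C * (-(g σ))) σ := by
    intro σ
    exact (((hGd σ).const_sub (G t)).const_mul C).const_add ‖y t‖
  have hed : ∀ σ : ℝ, HasDerivAt (fun σ : ℝ => Real.exp (C * σ)) (Real.exp (C * σ) * C) σ := by
    intro σ
    have h1 : HasDerivAt (fun σ : ℝ => C * σ) C σ := by
      simpa using (hasDerivAt_id σ).const_mul C
    have h2 := (Real.hasDerivAt_exp (C * σ)).comp σ h1
    exact h2
  have hPd : ∀ σ, HasDerivAt P ((C * Real.exp (C * σ)) * (H σ - g σ)) σ := by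
    intro σ
    have := (hHd σ).mul (hed σ)
    exact this.congr_deriv (by ring)
  have hHkey : ∀ σ ∈ Icc (0:ℝ) t, g σ ≤ H σ := by
    intro σ hσ
    rw [hH_def]; simp only
    rw [Gsplit σ, g_eq σ hσ]
    exact key σ hσ
  have hmono : MonotoneOn P (Icc 0 t) := by
    refine monotoneOn_of_deriv_nonneg (convex_Icc 0 t) ?_ ?_ ?_
    · exact (continuous_iff_continuousAt.2 fun σ => (hPd σ).continuousAt).continuousOn
    · exact fun σ _ => ((hPd σ).differentiableAt).differentiableWithinAt
    · intro σ hσ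
      rw [interior_Icc] at hσ
      rw [(hPd σ).deriv]
      exact mul_nonneg (mul_nonneg hC0 (Real.exp_pos _).le)
        (sub_nonneg.2 (hHkey σ (Ioo_subset_Icc_self hσ)))
  have hP0t : P 0 ≤ P t := hmono ⟨le_rfl, ht⟩ ⟨ht, le_rfl⟩ ht
  have hPt : P t = ‖y t‖ * Real.exp (C * t) := by
    rw [hP_def, hH_def]; simp only; rw [sub_self, mul_zero, add_zero]
  have hP0 : P 0 = H 0 := by
    rw [hP_def]; simp only; rw [mul_zero, Real.exp_zero, mul_one]
  have hx0 : ‖x‖ ≤ H 0 := by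
    have h00 : (0:ℝ) ∈ Icc (0:ℝ) t := ⟨le_rfl, ht⟩
    have := key 0 h00
    have hy0 : y 0 = x := by rw [hy_def]; simp only; rw [fund_zero hΦ, Mat.act_one]
    rw [hy0] at this
    rw [hH_def]; simp only [Gsplit]
    exact this
  have hyt0 : ‖y t‖ = 0 := by
    rw [hy_def]; simp only; rw [h0, norm_zero]
  have : ‖x‖ ≤ 0 := by
    have := hx0.trans (hP0 ▸ hP0t)
    rw [hPt, hyt0, zero_mul] at this
    exact this
  exact norm_le_zero_iff.mp this

lemma fund_isUnit {A Φ : ℝ → Mat n} (hA : Measurable A) {R : ℝ}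
    (hR : ∀ s, 0 ≤ s → ‖A s‖ ≤ R) (hΦ : IsFundamentalMatrix A Φ)
    {t : ℝ} (ht : 0 ≤ t) : IsUnit (Φ t) := by
  rw [← Matrix.mulVec_injective_iff_isUnit]
  intro v w hvw
  have keyv : ∀ u : Fin n → ℝ,
      Mat.act (Φ t) ((WithLp.equiv 2 (Fin n → ℝ)).symm u) =
        (WithLp.equiv 2 (Fin n → ℝ)).symm ((Φ t).mulVec u) := by
    intro u
    rfl
  have hsub : Mat.act (Φ t) ((WithLp.equiv 2 (Fin n → ℝ)).symm v -
      (WithLp.equiv 2 (Fin n → ℝ)).symm w) = 0 := by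
    rw [Mat.act_subv, keyv, keyv, hvw, sub_self]
  have := fund_act_eq_zero hA hR hΦ ht _ hsub
  have hvw2 : (WithLp.equiv 2 (Fin n → ℝ)).symm v = (WithLp.equiv 2 (Fin n → ℝ)).symm w :=
    sub_eq_zero.mp this
  exact (WithLp.equiv 2 (Fin n → ℝ)).symm.injective hvw2

end AuxB
section AuxC
variable {n : ℕ}

local instance matTopC : TopologicalSpace (Mat n) :=
  (Matrix.normedAddCommGroup : NormedAddCommGroup (Mat n)).toUniformSpace.toTopologicalSpace

lemma exists_fund_const (M₀ : Mat n) :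
    ∃ Φ : ℝ → Mat n, IsFundamentalMatrix (fun _ => M₀) Φ := by
  set e := Matrix.toEuclideanCLM (𝕜 := ℝ) (n := Fin n) with he
  set L : Vec n →L[ℝ] Vec n := e M₀ with hL
  set F : ℝ → (Vec n →L[ℝ] Vec n) := fun τ => NormedSpace.exp (τ • L) with hF
  have hFd : ∀ τ : ℝ, HasDerivAt F (L * F τ) τ := fun τ => hasDerivAt_exp_smul_const' L τ
  have hFc : Continuous F := continuous_iff_continuousAt.2 fun τ => (hFd τ).continuousAt
  refine ⟨fun τ => matCLMsymm n (F τ), ?_, ?_⟩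
  · exact ((matCLMsymm n).continuous.comp hFc).continuousOn
  · intro t _
    have hint : IntervalIntegrable (fun τ => L * F τ) volume 0 t :=
      (continuous_const.mul hFc).intervalIntegrable (μ := volume) _ _
    have hFTC : ∫ τ in (0:ℝ)..t, L * F τ = F t - F 0 :=
      intervalIntegral.integral_eq_sub_of_hasDerivAt (fun τ _ => hFd τ) hint
    have hF0 : F 0 = 1 := by
      rw [hF]
      show NormedSpace.exp ((0:ℝ) • L) = 1
      have h00 : (0:ℝ) • L = 0 := zero_smul ℝ L
      rw [h00]
      exact NormedSpace.exp_zero (𝔸 := Vec n →L[ℝ] Vec n)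
    have hcomm := (matCLMsymm n).intervalIntegral_comp_comm hint
    have heq : ∀ τ, matCLMsymm n (L * F τ) = M₀ * matCLMsymm n (F τ) := by
      intro τ
      rw [matCLMsymm_apply, map_mul, hL, he, StarAlgEquiv.symm_apply_apply, matCLMsymm_apply]
    show matCLMsymm n (F t) = 1 + ∫ s in (0:ℝ)..t, M₀ * matCLMsymm n (F s)
    calc matCLMsymm n (F t)
        = 1 + (matCLMsymm n (F t) - 1) := by abel
      _ = 1 + ∫ τ in (0:ℝ)..t, M₀ * matCLMsymm n (F τ) := by
          congr 1
          have h1 : matCLMsymm n (1 : Vec n →L[ℝ] Vec n) = 1 := by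
            rw [matCLMsymm_apply]; exact map_one _
          rw [← h1, ← map_sub, ← hF0, ← hFTC, ← hcomm]
          exact intervalIntegral.integral_congr (fun τ _ => (heq τ))
  
lemma norm_mem_trajNorms {M : Set (Mat n)} (hMne : M.Nonempty) (x : Vec n) :
    ‖x‖ ∈ trajNorms M x := by
  obtain ⟨M₀, hM₀⟩ := hMne
  obtain ⟨Φ, hΦ⟩ := exists_fund_const M₀
  refine ⟨fun _ => M₀, Φ, 0, ⟨measurable_const, fun _ _ => hM₀⟩, hΦ, le_rfl, ?_⟩
  rw [fund_zero hΦ, Mat.act_one]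

end AuxC
section AuxD
variable {n : ℕ}

local instance matTopD : TopologicalSpace (Mat n) :=
  (Matrix.normedAddCommGroup : NormedAddCommGroup (Mat n)).toUniformSpace.toTopologicalSpace

local instance matCMulD : ContinuousMul (Mat n) :=
  (inferInstance : @ContinuousMul (Matrix (Fin n) (Fin n) ℝ) instTopologicalSpaceMatrix _)

lemma integral_mul_const_mat {f : ℝ → Mat n} {a b : ℝ}
    (h : IntervalIntegrable f volume a b) (N : Mat n) :
    ∫ r in a..b, f r * N = (∫ r in a..b, f r) * N := by
  have := (LinearMap.toContinuousLinearMap (LinearMap.mulRight ℝ N)).intervalIntegral_comp_comm h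
  simpa using this

lemma concat_mem {M : Set (Mat n)} {R : ℝ} (hRb : ∀ m ∈ M, ‖m‖ ≤ R)
    {A Φ B Ψ : ℝ → Mat n} (hA : IsSwitchingLaw M A) (hΦ : IsFundamentalMatrix A Φ)
    (hB : IsSwitchingLaw M B) (hΨ : IsFundamentalMatrix B Ψ)
    {s t : ℝ} (hs : 0 ≤ s) (hst : s ≤ t) {u : ℝ} (hu : 0 ≤ u) (x₀ : Vec n) :
    ‖Mat.act (Ψ u) (Mat.act (Φ t) x₀)‖ ∈ trajNorms M (Mat.act (Φ s) x₀) := by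
  have ht0 : 0 ≤ t := hs.trans hst
  have hRA : ∀ r, 0 ≤ r → ‖A r‖ ≤ R := fun r hr => hRb _ (hA.2 r hr)
  have hRB : ∀ r, 0 ≤ r → ‖B r‖ ≤ R := fun r hr => hRb _ (hB.2 r hr)
  set d := t - s with hd
  have hd0 : 0 ≤ d := sub_nonneg.2 hst
  have hds : d + s = t := by rw [hd]; ring
  have hunit : IsUnit (Φ s) := fund_isUnit hA.1 hRA hΦ hs
  have hdet : IsUnit (Φ s).det := (Matrix.isUnit_iff_isUnit_det _).mp hunit
  set N := (Φ s)⁻¹ with hN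
  have hNl : N * Φ s = 1 := Matrix.nonsing_inv_mul _ hdet
  have hNr : Φ s * N = 1 := Matrix.mul_nonsing_inv _ hdet
  set Cc : ℝ → Mat n := fun r => if r < d then A (r + s) else B (r - d) with hCc
  set G : ℝ → Mat n := fun r => if r < d then Φ (r + s) else Ψ (r - d) * Φ t with hG
  set Ω : ℝ → Mat n := fun r => G r * N with hΩ
  have hΨ0 : Ψ 0 = 1 := fund_zero hΨ
  have hGeq1 : ∀ r ∈ Icc (0:ℝ) d, G r = Φ (r + s) := by
    intro r hr
    rcases lt_or_eq_of_le hr.2 with h | h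
    · simp only [hG, if_pos h]
    · subst h
      simp only [hG, lt_irrefl, if_neg (lt_irrefl d), sub_self, hΨ0, one_mul, hds]
  have hGeq2 : ∀ r, d ≤ r → G r = Ψ (r - d) * Φ t := by
    intro r hr
    simp only [hG, if_neg (not_lt.2 hr)]
  have hCcmeas : Measurable Cc :=
    Measurable.ite (measurableSet_lt measurable_id measurable_const)
      (hA.1.comp (measurable_add_const s)) (hB.1.comp (measurable_id.sub measurable_const))
  have hCc_law : IsSwitchingLaw M Cc := by
    refine ⟨hCcmeas, ?_⟩
    intro r hr
    by_cases h : r < d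
    · simp only [hCc, if_pos h]; exact hA.2 _ (by linarith)
    · simp only [hCc, if_neg h]
      exact hB.2 _ (by push_neg at h; linarith)
  have hRC : ∀ r, 0 ≤ r → ‖Cc r‖ ≤ R := fun r hr => hRb _ (hCc_law.2 r hr)
  -- continuity of G and Ω on [0, ∞)
  have hc1 : ContinuousOn (fun r => Φ (r + s)) (Ici (0:ℝ)) :=
    hΦ.1.comp ((continuous_id.add continuous_const).continuousOn)
      (fun r hr => mem_Ici.2 (add_nonneg hr hs))
  have hc2 : ContinuousOn (fun r => Ψ (r - d) * Φ t) (Ici d) := by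
    refine ContinuousOn.mul ?_ continuousOn_const
    exact hΨ.1.comp ((continuous_id.sub continuous_const).continuousOn)
      (fun r hr => mem_Ici.2 (by simpa using sub_nonneg.2 (mem_Ici.1 hr)))
  have hGc1 : ContinuousOn G (Icc 0 d) :=
    (hc1.mono (fun r hr => hr.1)).congr (fun r hr => hGeq1 r hr)
  have hGc2 : ContinuousOn G (Ici d) := hc2.congr (fun r hr => hGeq2 r hr)
  have hGcont : ContinuousOn G (Ici 0) := by
    intro r hr
    have hU : Ici (0:ℝ) ⊆ Icc 0 d ∪ Ici d := fun w hw =>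
      (le_or_gt w d).elim (fun h => Or.inl ⟨hw, h⟩) (fun h => Or.inr h.le)
    have h1 : ContinuousWithinAt G (Icc 0 d) r := by
      by_cases h : r ∈ Icc (0:ℝ) d
      · exact hGc1 r h
      · refine continuousWithinAt_of_notMem_closure ?_
        rw [isClosed_Icc.closure_eq]; exact h
    have h2 : ContinuousWithinAt G (Ici d) r := by
      by_cases h : r ∈ Ici d
      · exact hGc2 r h
      · refine continuousWithinAt_of_notMem_closure ?_
        rw [isClosed_Ici.closure_eq]; exact h
    exact (h1.union h2).mono hU
  have hΩcont : ContinuousOn Ω (Ici 0) := hGcont.mul continuousOn_const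
  -- step 1 : the integral equation on [0, d]
  have hne : ∀ᵐ r : ℝ ∂volume, r ≠ d := by
    have h1 : {r : ℝ | ¬ r ≠ d} = {d} := by ext r; simp
    rw [ae_iff, h1]
    exact measure_singleton d
  have hAs : Measurable (fun r => A (r + s)) := hA.1.comp (measurable_add_const s)
  have hRAs : ∀ r, 0 ≤ r → ‖A (r + s)‖ ≤ R := fun r hr => hRA _ (by linarith)
  have hstep1 : ∀ τ, 0 ≤ τ → τ ≤ d → Ω τ = 1 + ∫ r in (0:ℝ)..τ, Cc r * Ω r := by
    intro τ hτ0 hτd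
    have hae : ∀ᵐ r : ℝ ∂volume, r ∈ Set.uIoc (0:ℝ) τ → Cc r * Ω r = (A (r + s) * Φ (r + s)) * N := by
      filter_upwards [hne] with r hrne hrmem
      rw [Set.uIoc_of_le hτ0] at hrmem
      have hrd : r < d := lt_of_le_of_ne (hrmem.2.trans hτd) hrne
      simp only [hCc, hΩ, hG, if_pos hrd]
      rw [mul_assoc]
    have hf'int : IntervalIntegrable (fun r => A (r + s) * Φ (r + s)) volume 0 τ :=
      intInt hAs hRAs (hc1.mono (fun r hr => hr)) le_rfl hτ0
    have hshift : (∫ x in (0:ℝ)..τ, A (x + s) * Φ (x + s)) = ∫ x in s..(τ + s), A x * Φ x := by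
      simpa using
        intervalIntegral.integral_comp_add_right (a := (0:ℝ)) (b := τ) (f := fun r => A r * Φ r) s
    have hdiff := fund_diff hA.1 hRA hΦ hs (by linarith : s ≤ τ + s)
    have hI : ∫ r in (0:ℝ)..τ, Cc r * Ω r = (Φ (τ + s) - Φ s) * N := by
      rw [intervalIntegral.integral_congr_ae hae, integral_mul_const_mat hf'int N]
      congr 1
      rw [hshift, hdiff]
      abel
    have hΩτ : Ω τ = Φ (τ + s) * N := by
      simp only [hΩ]; rw [hGeq1 τ ⟨hτ0, hτd⟩]
    rw [hΩτ, hI, sub_mul, hNr]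
    abel
  -- step 2 : the integral equation on [d, ∞)
  have hstep2 : ∀ τ, d ≤ τ → Ω τ = 1 + ∫ r in (0:ℝ)..τ, Cc r * Ω r := by
    intro τ hτd
    have hτ0 : 0 ≤ τ := hd0.trans hτd
    have hint1 : IntervalIntegrable (fun r => Cc r * Ω r) volume 0 d :=
      intInt hCcmeas hRC hΩcont le_rfl hd0
    have hint2 : IntervalIntegrable (fun r => Cc r * Ω r) volume d τ :=
      intInt hCcmeas hRC hΩcont hd0 hτd
    have hsplit := intervalIntegral.integral_add_adjacent_intervals hint1 hint2
    have hΩd : Ω d = Φ t * N := by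
      simp only [hΩ]; rw [hGeq2 d le_rfl, sub_self, hΨ0, one_mul]
    have h1' : ∫ r in (0:ℝ)..d, Cc r * Ω r = Φ t * N - 1 := by
      have h0d := hstep1 d hd0 le_rfl
      rw [← hΩd, h0d]; abel
    have hBug : EqOn (fun r => Cc r * Ω r)
        (fun r => (fun w => (B w * Ψ w) * (Φ t * N)) (r - d)) (uIcc d τ) := by
      intro r hr
      rw [uIcc_of_le hτd] at hr
      have hrd : ¬ r < d := not_lt.2 hr.1
      simp only [hCc, hΩ, hG, if_neg hrd]
      simp only [mul_assoc]
    have hI2 : ∫ r in d..τ, Cc r * Ω r = (Ψ (τ - d) - 1) * (Φ t * N) := by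
      rw [intervalIntegral.integral_congr hBug]
      have hcomp : (∫ r in d..τ, (fun w => (B w * Ψ w) * (Φ t * N)) (r - d))
          = ∫ w in (0:ℝ)..(τ - d), (B w * Ψ w) * (Φ t * N) := by
        simpa using intervalIntegral.integral_comp_sub_right (a := d) (b := τ)
          (f := fun w => (B w * Ψ w) * (Φ t * N)) d
      rw [hcomp,
        integral_mul_const_mat (intInt hB.1 hRB hΨ.1 le_rfl (by linarith)) (Φ t * N)]
      congr 1
      have hΨτ := hΨ.2 (τ - d) (by linarith)
      rw [hΨτ]; abel
    have hΩτ : Ω τ = (Ψ (τ - d) * Φ t) * N := by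
      simp only [hΩ]; rw [hGeq2 τ hτd]
    rw [hΩτ, ← hsplit, h1', hI2]
    simp only [sub_mul, one_mul, mul_assoc]
    abel
  have hΩfund : IsFundamentalMatrix Cc Ω := by
    refine ⟨hΩcont, fun τ hτ => ?_⟩
    rcases le_or_gt τ d with h | h
    · exact hstep1 τ hτ h
    · exact hstep2 τ h.le
  refine ⟨Cc, Ω, u + d, hCc_law, hΩfund, by linarith, ?_⟩
  have hΩval : Ω (u + d) = Ψ u * (Φ t * N) := by
    simp only [hΩ]
    rw [hGeq2 _ (le_add_of_nonneg_left hu), add_sub_cancel_right, mul_assoc]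
  rw [hΩval, Mat.act_mul, Mat.act_mul]
  rw [← Mat.act_mul N (Φ s) x₀, hNl, Mat.act_one]

end AuxD

/-- If `𝓜` is bounded and `(Σ_𝓜)` is uniformly stable, then
`V(x) = sup { ‖Φ_A(t,0)x‖ : t ≥ 0, A a switching law }` is finite-valued, convex,
absolutely homogeneous of degree one, and a nonstrict common Lyapunov function. -/
theorem sup_trajNorms_nonstrictCLF {n : ℕ} (hn : 1 ≤ n)
    (M : Set (Mat n)) (hMne : M.Nonempty) (hM : Bornology.IsBounded M)
    (hstab : UniformlyStable M) :
    (∀ x : Vec n, BddAbove (trajNorms M x)) ∧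
    ConvexOn ℝ univ (fun x : Vec n => sSup (trajNorms M x)) ∧
    AbsHomog 1 (fun x : Vec n => sSup (trajNorms M x)) ∧
    IsNonstrictCLF M (fun x : Vec n => sSup (trajNorms M x)) := by
  obtain ⟨c, hc1, hact, hmulc⟩ := exists_mat_const n
  have hc0 : (0:ℝ) ≤ c := zero_le_one.trans hc1
  obtain ⟨CS, hCS0, hCS⟩ := hstab
  have helem : ∀ (x : Vec n) (r : ℝ), r ∈ trajNorms M x → r ≤ c * CS * ‖x‖ := by
    rintro x r ⟨A, Φ, t, hA, hΦ, ht, rfl⟩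
    calc ‖Mat.act (Φ t) x‖ ≤ c * ‖Φ t‖ * ‖x‖ := hact _ _
      _ ≤ c * CS * ‖x‖ := by
          have := hCS A Φ hA hΦ t ht
          exact mul_le_mul_of_nonneg_right (mul_le_mul_of_nonneg_left this hc0)
            (norm_nonneg _)
  have hbdd : ∀ x : Vec n, BddAbove (trajNorms M x) :=
    fun x => ⟨c * CS * ‖x‖, fun r hr => helem x r hr⟩
  have hne : ∀ x : Vec n, (trajNorms M x).Nonempty :=
    fun x => ⟨‖x‖, norm_mem_trajNorms hMne x⟩
  set V : Vec n → ℝ := fun x => sSup (trajNorms M x) with hV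
  have hVge : ∀ x, ‖x‖ ≤ V x := fun x => le_csSup (hbdd x) (norm_mem_trajNorms hMne x)
  have hVle : ∀ x, V x ≤ c * CS * ‖x‖ := fun x => csSup_le (hne x) (helem x)
  have hV0 : ∀ x, 0 ≤ V x := fun x => (norm_nonneg x).trans (hVge x)
  have hVscale : ∀ (a : ℝ) (x : Vec n), V (a • x) = |a| * V x := by
    intro a x
    have hsetscale : trajNorms M (a • x) = (fun r => |a| * r) '' trajNorms M x := by
      ext r
      constructor
      · rintro ⟨A, Φ, t, hA, hΦ, ht, rfl⟩
        exact ⟨‖Mat.act (Φ t) x‖, ⟨A, Φ, t, hA, hΦ, ht, rfl⟩, by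
          rw [Mat.act_smul, norm_smul, Real.norm_eq_abs]⟩
      · rintro ⟨r', ⟨A, Φ, t, hA, hΦ, ht, rfl⟩, rfl⟩
        exact ⟨A, Φ, t, hA, hΦ, ht, by rw [Mat.act_smul, norm_smul, Real.norm_eq_abs]⟩
    have hmono : Monotone (fun r : ℝ => |a| * r) :=
      fun r1 r2 h => mul_le_mul_of_nonneg_left h (abs_nonneg a)
    have hcont : ContinuousAt (fun r : ℝ => |a| * r) (sSup (trajNorms M x)) :=
      (continuous_const.mul continuous_id).continuousAt
    rw [hV]
    simp only
    rw [hsetscale]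
    exact (Monotone.map_csSup_of_continuousAt hcont hmono (hne x) (hbdd x)).symm
  refine ⟨hbdd, ?_, ?_, ?_⟩
  · -- convexity
    refine ⟨convex_univ, ?_⟩
    intro x _ y _ a b ha hb hab
    simp only [smul_eq_mul]
    refine csSup_le (hne _) ?_
    rintro r ⟨A, Φ, t, hA, hΦ, ht, rfl⟩
    have hsplit : Mat.act (Φ t) (a • x + b • y) = a • Mat.act (Φ t) x + b • Mat.act (Φ t) y := by
      rw [Mat.act_addv, Mat.act_smul, Mat.act_smul]
    have h1 : ‖Mat.act (Φ t) (a • x + b • y)‖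
        ≤ a * ‖Mat.act (Φ t) x‖ + b * ‖Mat.act (Φ t) y‖ := by
      rw [hsplit]
      refine (norm_add_le _ _).trans ?_
      rw [norm_smul, norm_smul, Real.norm_eq_abs, Real.norm_eq_abs,
        abs_of_nonneg ha, abs_of_nonneg hb]
    refine h1.trans ?_
    have h2 : ‖Mat.act (Φ t) x‖ ≤ V x := le_csSup (hbdd x) ⟨A, Φ, t, hA, hΦ, ht, rfl⟩
    have h3 : ‖Mat.act (Φ t) y‖ ≤ V y := le_csSup (hbdd y) ⟨A, Φ, t, hA, hΦ, ht, rfl⟩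
    exact add_le_add (mul_le_mul_of_nonneg_left h2 ha) (mul_le_mul_of_nonneg_left h3 hb)
  · -- absolute homogeneity of degree 1
    intro lam x
    rw [Real.rpow_one]
    exact hVscale lam x
  · -- nonstrict common Lyapunov function
    have hsubadd : ∀ x y : Vec n, V x ≤ V y + c * CS * ‖x - y‖ := by
      intro x y
      refine csSup_le (hne x) ?_
      rintro r ⟨A, Φ, t, hA, hΦ, ht, rfl⟩
      have h0 : y + (x - y) = x := by abel
      have hxy : Mat.act (Φ t) x = Mat.act (Φ t) y + Mat.act (Φ t) (x - y) := by
        rw [← Mat.act_addv, h0]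
      calc ‖Mat.act (Φ t) x‖ ≤ ‖Mat.act (Φ t) y‖ + ‖Mat.act (Φ t) (x - y)‖ := by
            rw [hxy]; exact norm_add_le _ _
        _ ≤ V y + c * CS * ‖x - y‖ :=
            add_le_add (le_csSup (hbdd y) ⟨A, Φ, t, hA, hΦ, ht, rfl⟩)
              (helem _ _ ⟨A, Φ, t, hA, hΦ, ht, rfl⟩)
    refine ⟨?_, hV0, ?_, ?_, ?_⟩
    · -- continuity
      have hlip : LipschitzWith (Real.toNNReal (c * CS)) V := by
        refine LipschitzWith.of_dist_le_mul ?_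
        intro x y
        rw [Real.dist_eq, Real.coe_toNNReal _ (mul_nonneg hc0 hCS0.le), dist_eq_norm]
        rw [abs_le]
        constructor
        · have h1 := hsubadd y x
          have h2 : ‖y - x‖ = ‖x - y‖ := norm_sub_rev _ _
          rw [h2] at h1
          linarith
        · have h1 := hsubadd x y
          linarith
      exact hlip.continuous
    · -- V 0 = 0
      have h1 : trajNorms M (0 : Vec n) = {0} := by
        apply Subset.antisymm
        · rintro r ⟨A, Φ, t, hA, hΦ, ht, rfl⟩
          simp [Mat.act_zero]
        · rw [singleton_subset_iff]
          have := norm_mem_trajNorms hMne (0 : Vec n)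
          simpa using this
      rw [hV]
      simp only
      rw [h1, csSup_singleton]
    · -- positive definiteness
      intro x hx
      have h1 := hVge x
      have h2 : 0 < ‖x‖ := norm_pos_iff.2 hx
      linarith
    · -- non-increasing along trajectories
      intro A Φ hA hΦ x₀
      intro s hsmem t htmem hst
      obtain ⟨R, hRb⟩ := isBounded_iff_forall_norm_le.mp hM
      refine csSup_le (hne _) ?_
      rintro r ⟨B, Ψ, u, hB, hΨ, hu, rfl⟩
      refine le_csSup (hbdd _) ?_
      exact concat_mem hRb hA hΦ hB hΨ hsmem hst hu x₀


end
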